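/- Let S ⊆ T be a subspace such that either dim S ≤ dim T − p or S = T, and let ω ∈ ⋀^{p+1} T* be any alternating (p+1)-form on T. Then the subspace L := {(X, ι_X ω + α) : X ∈ S, α ∈ ⋀^p S°} of E^p is Lagrangian, and pr_T(L) = S. -/

import Mathlib

open Module

/-- `E^p` for `p = q+1`: the vector space `T ⊕ ⋀^{q+1} T*`. -/
abbrev EP (T : Type) [AddCommGroup T] [Module ℝ T] (q : ℕ) :=
  T × (T [⋀^Fin (q+1)]→ₗ[ℝ] ℝ)

variable {T : Type} [AddCommGroup T] [Module ℝ T]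

/-- The `⋀^q T*`-valued pairing on `E^{q+1}`: `⟨(X,α),(Y,β)⟩ = ι_X β + ι_Y α`. -/
noncomputable def pairing {q : ℕ} (e₁ e₂ : EP T q) : T [⋀^Fin q]→ₗ[ℝ] ℝ :=
  e₂.2.curryLeft e₁.1 + e₁.2.curryLeft e₂.1

def orthSet {q : ℕ} (L : Set (EP T q)) : Set (EP T q) :=
  {e | ∀ l ∈ L, pairing e l = 0}

def IsIsotropic {q : ℕ} (L : Set (EP T q)) : Prop :=
  ∀ e₁ ∈ L, ∀ e₂ ∈ L, pairing e₁ e₂ = 0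

lemma anti {k : ℕ} (ω : T [⋀^Fin (k+2)]→ₗ[ℝ] ℝ) (X Y : T) :
    (ω.curryLeft X).curryLeft Y + (ω.curryLeft Y).curryLeft X = 0 := by
  have h : ((ω.curryLeft (X + Y)).curryLeft (X + Y)) = 0 := ω.curryLeft_same _
  simp only [map_add, AlternatingMap.curryLeft_add, LinearMap.add_apply,
    AlternatingMap.curryLeft_same] at h
  rw [← h]
  abel

lemma key_mem [FiniteDimensional ℝ T] {q : ℕ} (S : Submodule ℝ T)
    (hcodim : q + 1 + finrank ℝ S ≤ finrank ℝ T) (Y : T)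
    (h : ∀ α : T [⋀^Fin (q+1)]→ₗ[ℝ] ℝ, (∀ Z ∈ S, α.curryLeft Z = 0) → α.curryLeft Y = 0) :
    Y ∈ S := by
  by_contra hY
  have hπY : S.mkQ Y ≠ 0 := by
    simpa [Submodule.mkQ_apply, Submodule.Quotient.mk_eq_zero] using hY
  have hli : LinearIndepOn ℝ id ({S.mkQ Y} : Set (T ⧸ S)) :=
    LinearIndepOn.singleton (v := id) hπY
  let b := Module.Basis.extend hli
  haveI : Fintype ↥(hli.extend (Set.subset_univ _)) := FiniteDimensional.fintypeBasisIndex b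
  have hcard : finrank ℝ (T ⧸ S) = Fintype.card ↥(hli.extend (Set.subset_univ _)) :=
    finrank_eq_card_basis b
  have hquot : finrank ℝ (T ⧸ S) + finrank ℝ S = finrank ℝ T :=
    Submodule.finrank_quotient_add_finrank S
  have hn : q + 1 ≤ Fintype.card ↥(hli.extend (Set.subset_univ _)) := by omega
  let e := Fintype.equivFin ↥(hli.extend (Set.subset_univ _))
  have hmem : S.mkQ Y ∈ hli.extend (Set.subset_univ _) :=
    hli.subset_extend _ rfl
  let y0 : ↥(hli.extend (Set.subset_univ _)) := ⟨S.mkQ Y, hmem⟩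
  let j : Fin (q+1) → ↥(hli.extend (Set.subset_univ _)) := fun i =>
    e.symm (Equiv.swap (⟨0, by omega⟩ : Fin (Fintype.card ↥(hli.extend (Set.subset_univ _))))
      (e y0) (Fin.castLE hn i))
  have hj : Function.Injective j :=
    e.symm.injective.comp ((Equiv.swap _ _).injective.comp (Fin.castLE_injective hn))
  have hj0 : j 0 = y0 := by
    have : Fin.castLE hn (0 : Fin (q+1)) = ⟨0, by omega⟩ := rfl
    simp only [j]
    rw [this, Equiv.swap_apply_left, Equiv.symm_apply_apply]
  let ψ : (T ⧸ S) →ₗ[ℝ] (Fin (q+1) → ℝ) := LinearMap.pi fun i => b.coord (j i)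
  let g : T →ₗ[ℝ] (Fin (q+1) → ℝ) := ψ.comp S.mkQ
  let α : T [⋀^Fin (q+1)]→ₗ[ℝ] ℝ := (Matrix.detRowAlternating).compLinearMap g
  have hαS : ∀ Z ∈ S, α.curryLeft Z = 0 := by
    intro Z hZ
    have hgZ : g Z = 0 := by
      have : S.mkQ Z = 0 := (Submodule.Quotient.mk_eq_zero _).2 hZ
      simp [g, this]
    rw [show α.curryLeft Z =
        ((Matrix.detRowAlternating).curryLeft (g Z)).compLinearMap g from
      AlternatingMap.curryLeft_compLinearMap g _ Z, hgZ, map_zero]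
    ext v
    simp
  have hcontra := h α hαS
  let Z : Fin q → T := fun i => Function.surjInv (Submodule.mkQ_surjective S) (b (j i.succ))
  have happ := DFunLike.congr_fun hcontra Z
  have hbr : ∀ r : Fin (q+1), S.mkQ (Matrix.vecCons Y Z r) = b (j r) := by
    intro r
    refine Fin.cases ?_ ?_ r
    · rw [hj0]
      simp only [Matrix.cons_val_zero]
      exact (Module.Basis.extend_apply_self hli y0).symm
    · intro i
      simp only [Matrix.cons_val_succ]
      exact Function.surjInv_eq (Submodule.mkQ_surjective S) _
  classical
  have hM : (fun r => g (Matrix.vecCons Y Z r)) = (1 : Matrix (Fin (q+1)) (Fin (q+1)) ℝ) := by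
    funext r c
    show ψ (S.mkQ (Matrix.vecCons Y Z r)) c = _
    rw [hbr r]
    show b.coord (j c) (b (j r)) = _
    rw [Basis.coord_apply, Basis.repr_self, Finsupp.single_apply, Matrix.one_apply]
    by_cases hrc : r = c
    · subst hrc; rw [if_pos rfl, if_pos rfl]
    · have hjrc := hj.ne hrc
      rw [if_neg hjrc, if_neg hrc]
  have hval : (α.curryLeft Y) Z = 1 := by
    show α (Matrix.vecCons Y Z) = 1
    show Matrix.detRowAlternating (fun r => g (Matrix.vecCons Y Z r)) = 1
    rw [hM]
    exact Matrix.det_one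
  rw [happ] at hval
  simp at hval

theorem stmt3 [FiniteDimensional ℝ T] (q : ℕ) (hq : q + 1 ≤ finrank ℝ T)
    (S : Submodule ℝ T)
    (hS : finrank ℝ S ≤ finrank ℝ T - (q+1) ∨ S = ⊤)
    (ω : T [⋀^Fin (q+2)]→ₗ[ℝ] ℝ) :
    ({e : EP T q | ∃ X ∈ S, ∃ α : T [⋀^Fin (q+1)]→ₗ[ℝ] ℝ,
        (∀ Z ∈ S, α.curryLeft Z = 0) ∧ e = (X, ω.curryLeft X + α)} =
      orthSet {e : EP T q | ∃ X ∈ S, ∃ α : T [⋀^Fin (q+1)]→ₗ[ℝ] ℝ,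
        (∀ Z ∈ S, α.curryLeft Z = 0) ∧ e = (X, ω.curryLeft X + α)}) ∧
    Prod.fst '' {e : EP T q | ∃ X ∈ S, ∃ α : T [⋀^Fin (q+1)]→ₗ[ℝ] ℝ,
        (∀ Z ∈ S, α.curryLeft Z = 0) ∧ e = (X, ω.curryLeft X + α)} =
      (S : Set T) := by
  constructor
  · apply Set.Subset.antisymm
    · rintro e ⟨X, hX, α, hα, rfl⟩ l ⟨Y, hY, β, hβ, rfl⟩
      show (ω.curryLeft Y + β).curryLeft X + (ω.curryLeft X + α).curryLeft Y = 0
      rw [AlternatingMap.curryLeft_add, AlternatingMap.curryLeft_add,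
        LinearMap.add_apply, LinearMap.add_apply, hβ X hX, hα Y hY, add_zero, add_zero]
      have := anti ω X Y
      linear_combination (norm := abel) this
    · rintro ⟨Y, β⟩ he
      have hmem : Y ∈ S := by
        rcases hS with hS | rfl
        · have hc : q + 1 + finrank ℝ ↥S ≤ finrank ℝ T := by omega
          refine key_mem S hc Y ?_
          intro α hα
          have h0 := he (0, α) ⟨0, S.zero_mem, α, hα, by simp⟩
          have : α.curryLeft Y + β.curryLeft 0 = 0 := h0
          simpa using this
        · trivial
      refine ⟨Y, hmem, β - ω.curryLeft Y, ?_, by simp⟩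
      intro Z hZ
      have h1 := he (Z, ω.curryLeft Z) ⟨Z, hZ, 0, by simp, by simp⟩
      have h1' : (ω.curryLeft Z).curryLeft Y + β.curryLeft Z = 0 := h1
      have h2 := anti ω Y Z
      ext v
      have e1 := DFunLike.congr_fun h1' v
      have e2 := DFunLike.congr_fun h2 v
      simp only [AlternatingMap.add_apply, AlternatingMap.sub_apply,
        AlternatingMap.curryLeft_apply_apply, LinearMap.add_apply,
        AlternatingMap.zero_apply] at e1 e2 ⊢
      linarith
  · ext x
    constructor
    · rintro ⟨e, ⟨X, hX, α, hα, rfl⟩, rfl⟩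
      exact hX
    · intro hx
      exact ⟨(x, ω.curryLeft x + 0), ⟨x, hx, 0, by simp, rfl⟩, rfl⟩
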